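/- If τ is a symmetric 2×2 real matrix such that n_jᵀ τ n_j = 0 for j = 1, 2, 3, then τ = 0 (unisolvence of the lowest-order Hellan–Herrmann–Johnson degrees of freedom on a triangle). -/

import Mathlib

noncomputable section
open MeasureTheory

namespace PaperStmt

/-- Euclidean dot product on `ℝ²`. -/
def dotp (v w : ℝ × ℝ) : ℝ := v.1 * w.1 + v.2 * w.2

/-- Euclidean length on `ℝ²`. -/
def len (v : ℝ × ℝ) : ℝ := Real.sqrt (v.1 ^ 2 + v.2 ^ 2)

/-- Cross product (determinant) of two planar vectors. -/
def crossp (v w : ℝ × ℝ) : ℝ := v.1 * w.2 - v.2 * w.1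

/-- The vertices `p 0, p 1, p 2` form a nondegenerate triangle listed counterclockwise. -/
def Ccw (p : Fin 3 → ℝ × ℝ) : Prop := 0 < crossp (p 1 - p 0) (p 2 - p 0)

/-- Vector of the edge `e_i` opposite vertex `p i`, oriented counterclockwise
(from `p (i+1)` to `p (i−1)`). -/
def edgeVec (p : Fin 3 → ℝ × ℝ) (i : Fin 3) : ℝ × ℝ := p (i - 1) - p (i + 1)

/-- Length `|e_i|` of the edge opposite vertex `p i`. -/
def elen (p : Fin 3 → ℝ × ℝ) (i : Fin 3) : ℝ := len (edgeVec p i)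

/-- Unit tangent `t_i = (p_{i−1} − p_{i+1})/|e_i|` of edge `e_i`. -/
def tvec (p : Fin 3 → ℝ × ℝ) (i : Fin 3) : ℝ × ℝ := (elen p i)⁻¹ • edgeVec p i

/-- Outward unit normal `n_i` of edge `e_i` (clockwise rotation of the tangent,
which points outward for a counterclockwise triangle). -/
def nvec (p : Fin 3 → ℝ × ℝ) (i : Fin 3) : ℝ × ℝ := ((tvec p i).2, -(tvec p i).1)

/-- Interior angle `θ_i` of the triangle at the vertex `p i`. -/
def angleAt (p : Fin 3 → ℝ × ℝ) (i : Fin 3) : ℝ :=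
  Real.arccos (dotp (p (i + 1) - p i) (p (i - 1) - p i) /
    (len (p (i + 1) - p i) * len (p (i - 1) - p i)))

/-- Outer product `v wᵀ` of two planar (column) vectors, as a `2 × 2` matrix. -/
def outerProd (v w : ℝ × ℝ) : Matrix (Fin 2) (Fin 2) ℝ :=
  !![v.1 * w.1, v.1 * w.2; v.2 * w.1, v.2 * w.2]

/-- Basis matrices `φ_HHJ^i = −(1/(2 sin θ_{i−1} sin θ_{i+1})) (t_{i−1} t_{i+1}ᵀ + t_{i+1} t_{i−1}ᵀ)`
of the lowest-order Hellan–Herrmann–Johnson element. -/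
def phiHHJ (p : Fin 3 → ℝ × ℝ) (i : Fin 3) : Matrix (Fin 2) (Fin 2) ℝ :=
  (-(2 * Real.sin (angleAt p (i - 1)) * Real.sin (angleAt p (i + 1)))⁻¹) •
    (outerProd (tvec p (i - 1)) (tvec p (i + 1)) + outerProd (tvec p (i + 1)) (tvec p (i - 1)))

/-- The quadratic form `vᵀ τ v` of a `2 × 2` matrix on a planar vector. -/
def qf (τ : Matrix (Fin 2) (Fin 2) ℝ) (v : ℝ × ℝ) : ℝ :=
  v.1 * (τ 0 0 * v.1 + τ 0 1 * v.2) + v.2 * (τ 1 0 * v.1 + τ 1 1 * v.2)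

end PaperStmt

/-- Key algebraic lemma. -/
theorem HHJ_key (a b c u1 u2 v1 v2 : ℝ) (hd : u1 * v2 - u2 * v1 ≠ 0)
    (hu : a * u1 ^ 2 + 2 * b * u1 * u2 + c * u2 ^ 2 = 0)
    (hv : a * v1 ^ 2 + 2 * b * v1 * v2 + c * v2 ^ 2 = 0)
    (hw : a * (u1 + v1) ^ 2 + 2 * b * (u1 + v1) * (u2 + v2) + c * (u2 + v2) ^ 2 = 0) :
    a = 0 ∧ b = 0 ∧ c = 0 := by
  have hB : a * u1 * v1 + b * (u1 * v2 + u2 * v1) + c * u2 * v2 = 0 := by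
    linear_combination (hw - hu - hv) / 2
  have hd2 : (u1 * v2 - u2 * v1) ^ 2 ≠ 0 := pow_ne_zero _ hd
  refine ⟨?_, ?_, ?_⟩
  · have : a * (u1 * v2 - u2 * v1) ^ 2 = 0 := by
      linear_combination v2 ^ 2 * hu + u2 ^ 2 * hv - 2 * u2 * v2 * hB
    exact (mul_eq_zero.1 this).resolve_right hd2
  · have : b * (u1 * v2 - u2 * v1) ^ 2 = 0 := by
      linear_combination (-(v1 * v2)) * hu + (-(u1 * u2)) * hv + (u1 * v2 + u2 * v1) * hB
    exact (mul_eq_zero.1 this).resolve_right hd2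
  · have : c * (u1 * v2 - u2 * v1) ^ 2 = 0 := by
      linear_combination v1 ^ 2 * hu + u1 ^ 2 * hv - 2 * u1 * v1 * hB
    exact (mul_eq_zero.1 this).resolve_right hd2

open PaperStmt in
/-- Unisolvence of the lowest-order Hellan–Herrmann–Johnson degrees of freedom:
a symmetric `2 × 2` matrix with `n_jᵀ τ n_j = 0` for all three edge normals is zero. -/
theorem HHJ_unisolvence (p : Fin 3 → ℝ × ℝ) (hp : Ccw p)
    (τ : Matrix (Fin 2) (Fin 2) ℝ) (hτ : τ.IsSymm)
    (h0 : ∀ j : Fin 3, qf τ (nvec p j) = 0) : τ = 0 := by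
  simp only [Ccw, crossp, Prod.fst_sub, Prod.snd_sub] at hp
  have hba : τ 1 0 = τ 0 1 := by
    have := congrFun (congrFun hτ 0) 1
    simpa [Matrix.transpose_apply] using this
  have hqs : ∀ (s : ℝ) (v : ℝ × ℝ), qf τ (s • v) = s ^ 2 * qf τ v := by
    intro s v
    simp only [qf, Prod.smul_fst, Prod.smul_snd, smul_eq_mul]
    ring
  have h3 : ∀ j : Fin 3, j = 0 ∨ j = 1 ∨ j = 2 := by decide
  have hwz : ∀ j : Fin 3, qf τ ((edgeVec p j).2, -(edgeVec p j).1) = 0 := by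
    intro j
    have hlen : 0 < elen p j := by
      rw [elen, len, Real.sqrt_pos]
      have hA : (0:ℝ) ≤ ((p 1).1 - (p 0).1) ^ 2 + ((p 1).2 - (p 0).2) ^ 2 :=
        add_nonneg (sq_nonneg _) (sq_nonneg _)
      have hB : (0:ℝ) ≤ ((p 1).1 - (p 2).1) ^ 2 + ((p 1).2 - (p 2).2) ^ 2 :=
        add_nonneg (sq_nonneg _) (sq_nonneg _)
      rcases h3 j with rfl | rfl | rfl <;>
        simp only [edgeVec, show ((0:Fin 3) - 1) = 2 from rfl, show ((0:Fin 3) + 1) = 1 from rfl,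
          show ((1:Fin 3) - 1) = 0 from rfl, show ((1:Fin 3) + 1) = 2 from rfl,
          show ((2:Fin 3) - 1) = 1 from rfl, show ((2:Fin 3) + 1) = 0 from rfl,
          Prod.fst_sub, Prod.snd_sub]
      · nlinarith [hp, hA,
          sq_nonneg (((p 1).1 - (p 0).1) * ((p 2).1 - (p 1).1) + ((p 1).2 - (p 0).2) * ((p 2).2 - (p 1).2))]
      · nlinarith [hp, hB,
          sq_nonneg (((p 1).1 - (p 2).1) * ((p 0).1 - (p 2).1) + ((p 1).2 - (p 2).2) * ((p 0).2 - (p 2).2))]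
      · nlinarith [hp, add_nonneg (sq_nonneg ((p 0).1 - (p 2).1)) (sq_nonneg ((p 0).2 - (p 2).2)),
          sq_nonneg (((p 0).1 - (p 2).1) * ((p 1).1 - (p 0).1) + ((p 0).2 - (p 2).2) * ((p 1).2 - (p 0).2))]
    have hnv : nvec p j = (elen p j)⁻¹ • ((edgeVec p j).2, -(edgeVec p j).1) := by
      simp only [nvec, tvec, Prod.smul_fst, Prod.smul_snd, smul_eq_mul, Prod.smul_mk,
        Prod.mk.injEq]
      exact ⟨trivial, by ring⟩
    have h := h0 j
    rw [hnv, hqs] at h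
    rcases mul_eq_zero.1 h with h | h
    · exact absurd h (pow_ne_zero _ (inv_ne_zero hlen.ne'))
    · exact h
  have hu := hwz 0
  have hv := hwz 1
  have hw := hwz 2
  simp only [edgeVec, show ((0:Fin 3) - 1) = 2 from rfl, show ((0:Fin 3) + 1) = 1 from rfl,
    show ((1:Fin 3) - 1) = 0 from rfl, show ((1:Fin 3) + 1) = 2 from rfl,
    show ((2:Fin 3) - 1) = 1 from rfl, show ((2:Fin 3) + 1) = 0 from rfl,
    Prod.fst_sub, Prod.snd_sub, qf, hba] at hu hv hw
  obtain ⟨ha, hb, hc⟩ := HHJ_key (τ 0 0) (τ 0 1) (τ 1 1)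
    ((p 2).2 - (p 1).2) (-((p 2).1 - (p 1).1))
    ((p 0).2 - (p 2).2) (-((p 0).1 - (p 2).1))
    (by intro h; exact hp.ne' (by linear_combination h))
    (by linear_combination hu) (by linear_combination hv)
    (by linear_combination hw)
  have h2 : ∀ i : Fin 2, i = 0 ∨ i = 1 := by decide
  ext i j
  rcases h2 i with rfl | rfl <;> rcases h2 j with rfl | rfl
  · exact ha
  · exact hb
  · exact hba.trans hb
  · exact hc
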